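/- Let a = a_2⋯a_{p+1} and b = b_2⋯b_{p+1} where a_j = σ_{i_j−1+j}⋯σ_j (or e if i_j = 0), b_j = σ_{l_j−1+j}⋯σ_j (or e if l_j = 0), with i_{j+1} ≥ i_j and l_{j+1} ≥ l_j for all j. Define c_j = a_j if ℓ(a_j) ≥ ℓ(b_j) and c_j = b_j otherwise, and c = c_2⋯c_{p+1}. Then c is the least common multiple of a and b with respect to right-divisibility; in particular c = a′a = b′b with a′ = a′_2⋯a′_{p+1} and b′ = b′_2⋯b′_{p+1}, where a′_j = σ_{l_j+j−1}⋯σ_{i_j+j} when l_j > i_j and a′_j = e otherwise, and symmetrically for b′_j. -/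

import Mathlib

namespace ArtinStmt

/-- The alternating word π(s,t;k) = stst... of length k in the free monoid. -/
def altWord {S : Type*} (s t : S) : ℕ → FreeMonoid S
  | 0 => 1
  | n + 1 => FreeMonoid.of s * altWord t s n

/-- The braid/Artin relations coming from a Coxeter-type matrix `M`
(with `M s t = 0` encoding `∞`, i.e. no relation). -/
def artinRel {S : Type*} (M : S → S → ℕ) (x y : FreeMonoid S) : Prop :=
  ∃ s t, s ≠ t ∧ M s t ≠ 0 ∧ x = altWord s t (M s t) ∧ y = altWord t s (M s t)

/-- The congruence on the free monoid generated by the Artin relations. -/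
def artinCon {S : Type*} (M : S → S → ℕ) : Con (FreeMonoid S) := conGen (artinRel M)

/-- The Artin monoid associated to the matrix `M`. -/
abbrev ArtinMonoid {S : Type*} (M : S → S → ℕ) := (artinCon M).Quotient

/-- The generator σ_s of the Artin monoid. -/
def gen {S : Type*} (M : S → S → ℕ) (s : S) : ArtinMonoid M := (artinCon M).mk' (FreeMonoid.of s)

/-- Right-divisibility: `a ⪯R b` iff `b = c * a` for some `c`. -/
def RDvd {A : Type*} [Monoid A] (a b : A) : Prop := ∃ c, b = c * a

/-- The Coxeter matrix of type A: m(i,j) = 3 for adjacent indices, 2 otherwise. -/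
def braidM : ℕ → ℕ → ℕ := fun i j =>
  if i = j then 1 else if i + 1 = j ∨ j + 1 = i then 3 else 2

/-- The positive braid monoid (type A Artin monoid). -/
abbrev BraidMonoid := ArtinMonoid braidM

/-- The braid generator σ_i. -/
def bσ (i : ℕ) : BraidMonoid := gen braidM i

/-- The descending product σ_k σ_{k-1} ⋯ σ_j (equal to 1 if k < j). -/
def bdesc (k j : ℕ) : BraidMonoid := ((List.range' j (k + 1 - j)).reverse.map bσ).prod


/-- The factor a_j = σ_{i_j−1+j}⋯σ_j (equal to e when i_j = 0). -/
def factorWord (i : ℕ → ℕ) (j : ℕ) : BraidMonoid :=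
  if i j = 0 then 1 else bdesc (i j - 1 + j) j

/-- The product a = a_2 ⋯ a_{p+1}. -/
def factorProd (i : ℕ → ℕ) (p : ℕ) : BraidMonoid :=
  ((List.range' 2 p).map (factorWord i)).prod

/-- c_j: the longer of a_j and b_j. -/
def cWord (i l : ℕ → ℕ) (j : ℕ) : BraidMonoid :=
  if l j ≤ i j then factorWord i j else factorWord l j

/-- a′_j = σ_{l_j+j−1}⋯σ_{i_j+j} when l_j > i_j, and e otherwise. -/
def primeWord (i l : ℕ → ℕ) (j : ℕ) : BraidMonoid :=
  if i j < l j then bdesc (l j - 1 + j) (i j + j) else 1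

/-! ### Word level -/

def adjP (a b : ℕ) : Prop := a + 1 = b ∨ b + 1 = a

def dstP (a b : ℕ) : Prop := ¬ adjP a b ∧ a ≠ b

lemma adjP_symm {a b} (h : adjP a b) : adjP b a := h.symm
lemma dstP_symm {a b} (h : dstP a b) : dstP b a := ⟨fun hh => h.1 hh.symm, h.2.symm⟩

def brel (u v : List ℕ) : Prop :=
  (∃ s t, dstP s t ∧ u = [s, t] ∧ v = [t, s]) ∨
  (∃ s t, adjP s t ∧ u = [s, t, s] ∧ v = [t, s, t])

lemma brel_symm {u v} (h : brel u v) : brel v u := by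
  rcases h with ⟨s, t, h1, h2, h3⟩ | ⟨s, t, h1, h2, h3⟩
  · exact Or.inl ⟨t, s, dstP_symm h1, h3, h2⟩
  · exact Or.inr ⟨t, s, adjP_symm h1, h3, h2⟩

lemma braidM_dst {s t : ℕ} (h : dstP s t) : braidM s t = 2 := by
  show (if s = t then 1 else if s + 1 = t ∨ t + 1 = s then 3 else 2) = 2
  have h1 : ¬ (s + 1 = t ∨ t + 1 = s) := h.1
  rw [if_neg h.2, if_neg h1]

lemma braidM_adj {s t : ℕ} (h : adjP s t) : braidM s t = 3 := by
  have hne : s ≠ t := by rcases h with h | h <;> omega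
  show (if s = t then 1 else if s + 1 = t ∨ t + 1 = s then 3 else 2) = 3
  have h1 : s + 1 = t ∨ t + 1 = s := h
  rw [if_neg hne, if_pos h1]

lemma ofList_inj {u v : List ℕ} (h : FreeMonoid.ofList u = FreeMonoid.ofList v) : u = v := h

lemma brel_iff_artinRel (u v : List ℕ) :
    brel u v ↔ artinRel braidM (FreeMonoid.ofList u) (FreeMonoid.ofList v) := by
  constructor
  · rintro (⟨s, t, hd, h2, h3⟩ | ⟨s, t, ha, h2, h3⟩)
    · exact ⟨s, t, hd.2, by rw [braidM_dst hd]; omega,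
        by rw [braidM_dst hd, h2]; rfl, by rw [braidM_dst hd, h3]; rfl⟩
    · have hne : s ≠ t := by rcases ha with h | h <;> omega
      exact ⟨s, t, hne, by rw [braidM_adj ha]; omega,
        by rw [braidM_adj ha, h2]; rfl, by rw [braidM_adj ha, h3]; rfl⟩
  · rintro ⟨s, t, hne, hM0, h2, h3⟩
    by_cases ha : adjP s t
    · rw [braidM_adj ha] at h2 h3
      exact Or.inr ⟨s, t, ha, ofList_inj h2, ofList_inj h3⟩
    · rw [braidM_dst ⟨ha, hne⟩] at h2 h3
      exact Or.inl ⟨s, t, ⟨ha, hne⟩, ofList_inj h2, ofList_inj h3⟩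

lemma brel_length {u v} (h : brel u v) : u.length = v.length := by
  rcases h with ⟨s, t, _, h2, h3⟩ | ⟨s, t, _, h2, h3⟩ <;> subst h2 h3 <;> rfl

/-- One rewriting step on words. -/
def StepL (x y : List ℕ) : Prop :=
  ∃ p q u v, brel u v ∧ x = p ++ u ++ q ∧ y = p ++ v ++ q

lemma StepL.symm {x y} (h : StepL x y) : StepL y x := by
  obtain ⟨p, q, u, v, h1, h2, h3⟩ := h
  exact ⟨p, q, v, u, brel_symm h1, h3, h2⟩

lemma StepL.length {x y} (h : StepL x y) : x.length = y.length := by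
  obtain ⟨p, q, u, v, h1, h2, h3⟩ := h
  subst h2 h3; simp [brel_length h1]

/-- chains -/
abbrev Ch (x y : List ℕ) : Prop := Relation.ReflTransGen StepL x y

lemma Ch.length {x y} (h : Ch x y) : x.length = y.length := by
  induction h with
  | refl => rfl
  | tail _ h ih => exact ih.trans h.length

/-- the congruence on lists -/
def Rl (x y : List ℕ) : Prop := artinCon braidM (FreeMonoid.ofList x) (FreeMonoid.ofList y)

lemma Rl.refl (x : List ℕ) : Rl x x := (artinCon braidM).refl _
lemma Rl.symm {x y} (h : Rl x y) : Rl y x := (artinCon braidM).symm h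
lemma Rl.trans {x y z} (h : Rl x y) (h' : Rl y z) : Rl x z := (artinCon braidM).trans h h'

lemma Rl.append {x y u v} (h : Rl x y) (h' : Rl u v) : Rl (x ++ u) (y ++ v) := by
  have := (artinCon braidM).mul h h'
  simpa [Rl, FreeMonoid.ofList_append] using this

lemma StepL.rl {x y} (h : StepL x y) : Rl x y := by
  obtain ⟨p, q, u, v, h1, h2, h3⟩ := h
  subst h2 h3
  exact Rl.append (Rl.append (Rl.refl p) (ConGen.Rel.of _ _ ((brel_iff_artinRel u v).1 h1))) (Rl.refl q)

lemma Ch.rl {x y} (h : Ch x y) : Rl x y := by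
  induction h with
  | refl => exact Rl.refl _
  | tail _ h ih => exact ih.trans h.rl

/-- chains form a congruence -/
def chCon : Con (FreeMonoid ℕ) where
  r x y := Ch x.toList y.toList
  iseqv := by
    constructor
    · intro x; exact Relation.ReflTransGen.refl
    · intro x y h
      haveI : Std.Symm StepL := ⟨fun _ _ hs => hs.symm⟩
      exact Std.Symm.symm (r := Relation.ReflTransGen StepL) _ _ h
    · intro x y z h h'; exact h.trans h'
  mul' := by
    intro w x y z h h'
    have key : ∀ a b u v : List ℕ, Ch a b → Ch u v → Ch (a ++ u) (b ++ v) := by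
      intro a b u v hab huv
      have h1 : Ch (a ++ u) (b ++ u) := by
        clear huv
        induction hab with
        | refl => exact Relation.ReflTransGen.refl
        | tail _ hs ih =>
            refine ih.tail ?_
            obtain ⟨p, q, l, r, h1, h2, h3⟩ := hs
            exact ⟨p, q ++ u, l, r, h1, by simp [h2], by simp [h3]⟩
      have h2 : Ch (b ++ u) (b ++ v) := by
        clear h1 hab
        induction huv with
        | refl => exact Relation.ReflTransGen.refl
        | tail _ hs ih =>
            refine ih.tail ?_
            obtain ⟨p, q, l, r, h1, h2, h3⟩ := hs
            exact ⟨b ++ p, q, l, r, h1, by simp [h2], by simp [h3]⟩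
      exact h1.trans h2
    exact key _ _ _ _ h h'

lemma rl_iff_ch {x y : List ℕ} : Rl x y ↔ Ch x y := by
  constructor
  · intro h
    have hle : artinCon braidM ≤ chCon := by
      rw [artinCon]
      refine Con.conGen_le.2 ?_
      intro a b hab
      refine Relation.ReflTransGen.single ?_
      refine ⟨[], [], a.toList, b.toList, ?_, by simp, by simp⟩
      rw [brel_iff_artinRel]
      simpa using hab
    exact Con.le_def.mp hle h
  · exact Ch.rl

lemma Rl.length {x y} (h : Rl x y) : x.length = y.length := (rl_iff_ch.1 h).length


/-! ### Stage 2: the key lemma -/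

lemma Rl.cons (c : ℕ) {u v} (h : Rl u v) : Rl (c :: u) (c :: v) :=
  Rl.append (Rl.refl [c]) h

lemma Rl.swapL {c d : ℕ} (h : dstP c d) (w : List ℕ) : Rl (c :: d :: w) (d :: c :: w) :=
  StepL.rl ⟨[], w, [c, d], [d, c], Or.inl ⟨c, d, h, rfl, rfl⟩, rfl, rfl⟩

lemma Rl.braidL {c d : ℕ} (h : adjP c d) (w : List ℕ) :
    Rl (c :: d :: c :: w) (d :: c :: d :: w) :=
  StepL.rl ⟨[], w, [c, d, c], [d, c, d], Or.inr ⟨c, d, h, rfl, rfl⟩, rfl, rfl⟩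

/-- the complement word: lcm(c,d) = (c :: comp c d).reverse-ish; here
`c :: comp c d ≈ d :: comp d c` is the common multiple pattern on the left. -/
def comp (c d : ℕ) : List ℕ := if c + 1 = d ∨ d + 1 = c then [d, c] else [d]

lemma comp_adj {c d : ℕ} (h : adjP c d) : comp c d = [d, c] := if_pos h

lemma comp_dst {c d : ℕ} (h : ¬ adjP c d) : comp c d = [d] := if_neg h

infix:50 " ≋ " => Rl

instance : Trans Rl Rl Rl := ⟨Rl.trans⟩

def KeyQ (x y : List ℕ) : Prop :=
  ∀ a u, x = a :: u → ∀ b v, y = b :: v →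
    (a = b → Rl u v) ∧ (a ≠ b → ∃ w, Rl u (comp a b ++ w) ∧ Rl v (comp b a ++ w))

theorem keyLemma : ∀ N x y, Ch x y → x.length ≤ N → KeyQ x y := by
  intro N
  induction N with
  | zero =>
      intro x y _ hl a u hx _ _ _
      subst hx; simp at hl
  | succ N ih =>
      -- helpers
      have canc : ∀ (c : ℕ) (z₁ z₂ : List ℕ), Rl (c :: z₁) (c :: z₂) →
          z₁.length + 1 ≤ N → Rl z₁ z₂ := by
        intro c z₁ z₂ h hl
        exact (ih _ _ (rl_iff_ch.1 h) (by simpa using hl) c z₁ rfl c z₂ rfl).1 rfl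
      have lcmD : ∀ (c d : ℕ) (z₁ z₂ : List ℕ), dstP c d → Rl (c :: z₁) (d :: z₂) →
          z₁.length + 1 ≤ N → ∃ w, Rl z₁ (d :: w) ∧ Rl z₂ (c :: w) := by
        intro c d z₁ z₂ hcd h hl
        obtain ⟨w, h1, h2⟩ :=
          (ih _ _ (rl_iff_ch.1 h) (by simpa using hl) c z₁ rfl d z₂ rfl).2 hcd.2
        rw [comp_dst hcd.1] at h1
        rw [comp_dst (fun hh => hcd.1 (adjP_symm hh))] at h2
        exact ⟨w, by simpa using h1, by simpa using h2⟩
      have lcmA : ∀ (c d : ℕ) (z₁ z₂ : List ℕ), adjP c d → Rl (c :: z₁) (d :: z₂) →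
          z₁.length + 1 ≤ N → ∃ w, Rl z₁ (d :: c :: w) ∧ Rl z₂ (c :: d :: w) := by
        intro c d z₁ z₂ hcd h hl
        have hne : c ≠ d := by rcases hcd with h' | h' <;> omega
        obtain ⟨w, h1, h2⟩ :=
          (ih _ _ (rl_iff_ch.1 h) (by simpa using hl) c z₁ rfl d z₂ rfl).2 hne
        rw [comp_adj hcd] at h1
        rw [comp_adj (adjP_symm hcd)] at h2
        exact ⟨w, by simpa using h1, by simpa using h2⟩
      intro x y hch
      induction hch using Relation.ReflTransGen.head_induction_on with
      | refl =>
          intro _ a u hx b v hy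
          rw [hx] at hy
          injection hy with h1 h2
          exact ⟨fun _ => h2 ▸ Rl.refl u, fun hne => absurd h1 hne⟩
      | @head x x' hstep hrest ihk =>
          intro hxlen a u hxau b v hybv
          subst hxau
          have hulen : u.length ≤ N := by simpa using hxlen
          obtain ⟨p, q, lw, rw, hrel, he1, he2⟩ := hstep
          have hLR : lw.length = rw.length := brel_length hrel
          cases p with
          | cons c p' =>
              have he1' : a :: u = c :: (p' ++ lw ++ q) := by simpa using he1
              injection he1' with h1 h2
              subst h1
              have he2' : x' = a :: (p' ++ rw ++ q) := by simpa using he2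
              have hx'len : x'.length ≤ N + 1 := by
                rw [he2']; rw [h2] at hulen; simp only [List.length_cons, List.length_append] at *
                omega
              have hK := ihk hx'len a (p' ++ rw ++ q) he2' b v hybv
              have hstep' : Rl u (p' ++ rw ++ q) :=
                StepL.rl ⟨p', q, lw, rw, hrel, h2, rfl⟩
              refine ⟨fun hab => hstep'.trans (hK.1 hab), fun hab => ?_⟩
              obtain ⟨w, hw1, hw2⟩ := hK.2 hab
              exact ⟨w, hstep'.trans hw1, hw2⟩
          | nil =>
              simp only [List.nil_append] at he1 he2
              rcases hrel with ⟨s, t, hst, hlw, hrw⟩ | ⟨s, t, hst, hlw, hrw⟩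
              · -- distant relation at the head : x = a t q , x' = t a q , dst a t
                subst hlw hrw
                have he1' : a :: u = s :: t :: q := by simpa using he1
                injection he1' with h1 h2
                subst h1
                have hdat : dstP a t := hst
                have hqN : q.length + 1 ≤ N := by rw [h2] at hulen; simpa using hulen
                have he2' : x' = t :: (a :: q) := by simpa using he2
                have hx'len : x'.length ≤ N + 1 := by
                  rw [he2']; simp only [List.length_cons]; omega
                have hK := ihk hx'len t (a :: q) he2' b v hybv
                constructor
                · -- cancellation branch : b = a
                  intro hab; subst hab
                  have hta : t ≠ a := fun h => hdat.2 h.symm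
                  obtain ⟨w₁, h₁, h₂⟩ := hK.2 hta
                  rw [comp_dst (fun h => hdat.1 (adjP_symm h))] at h₁
                  rw [comp_dst hdat.1] at h₂
                  have h₁' : Rl (a :: q) (a :: w₁) := by simpa using h₁
                  have hq : Rl q w₁ := canc a q w₁ h₁' hqN
                  rw [h2]
                  have h₂' : Rl v (t :: w₁) := by simpa using h₂
                  exact (Rl.cons t hq).trans h₂'.symm
                · -- lcm branch
                  intro hab
                  by_cases hrb : t = b
                  · subst hrb
                    have h₀ : Rl (a :: q) v := hK.1 rfl
                    refine ⟨q, ?_, ?_⟩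
                    · rw [comp_dst hdat.1, h2]; exact Rl.refl _
                    · rw [comp_dst (fun h => hdat.1 (adjP_symm h))]
                      exact h₀.symm
                  · obtain ⟨w₁, h₁, h₂⟩ := hK.2 hrb
                    by_cases hatb : adjP t b
                    · rw [comp_adj hatb] at h₁
                      rw [comp_adj (adjP_symm hatb)] at h₂
                      have h₁' : Rl (a :: q) (b :: t :: w₁) := by simpa using h₁
                      have h₂' : Rl v (t :: b :: w₁) := by simpa using h₂
                      have hw₁l : w₁.length + 1 = q.length := by
                        have := h₁'.length; simp only [List.length_cons] at this; omega
                      by_cases haab : adjP a b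
                      · -- LEAF 2a-AA
                        obtain ⟨w₂, hq, h₃⟩ := lcmA a b q (t :: w₁) haab h₁' hqN
                        have hw₂l : w₂.length + 2 = q.length := by
                          have := hq.length; simp only [List.length_cons] at this; omega
                        obtain ⟨w₃, hw₁, h₄⟩ :=
                          lcmD t a w₁ (b :: w₂) (dstP_symm hdat) h₃ (by omega)
                        obtain ⟨w₄, hw₂, hw₃⟩ := lcmA b t w₂ w₃ (adjP_symm hatb) h₄ (by omega)
                        refine ⟨t :: b :: a :: w₄, ?_, ?_⟩
                        · rw [comp_adj haab, h2]
                          show Rl (t :: q) (b :: a :: t :: b :: a :: w₄)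
                          refine (Rl.cons t hq).trans ?_
                          refine (Rl.cons t (Rl.cons b (Rl.cons a hw₂))).trans ?_
                          refine (Rl.cons t (Rl.cons b (Rl.swapL hdat (b :: w₄)))).trans ?_
                          refine (Rl.braidL hatb (a :: b :: w₄)).trans ?_
                          refine (Rl.cons b (Rl.cons t (Rl.braidL (adjP_symm haab) w₄))).trans ?_
                          exact Rl.cons b (Rl.swapL (dstP_symm hdat) (b :: a :: w₄))
                        · rw [comp_adj (adjP_symm haab)]
                          show Rl v (a :: b :: t :: b :: a :: w₄)
                          refine h₂'.trans ?_
                          refine (Rl.cons t (Rl.cons b hw₁)).trans ?_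
                          refine (Rl.cons t (Rl.cons b (Rl.cons a hw₃))).trans ?_
                          refine (Rl.cons t (Rl.braidL (adjP_symm haab) (t :: w₄))).trans ?_
                          refine (Rl.swapL (dstP_symm hdat) (b :: a :: t :: w₄)).trans ?_
                          refine (Rl.cons a (Rl.cons t (Rl.cons b (Rl.swapL hdat w₄)))).trans ?_
                          exact Rl.cons a (Rl.braidL hatb (a :: w₄))
                      · -- LEAF 2a-AD
                        obtain ⟨w₂, hq, h₃⟩ := lcmD a b q (t :: w₁) ⟨haab, hab⟩ h₁' hqN
                        obtain ⟨w₃, hw₁, hw₂⟩ := lcmD t a w₁ w₂ (dstP_symm hdat) h₃ (by omega)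
                        refine ⟨t :: b :: w₃, ?_, ?_⟩
                        · rw [comp_dst haab, h2]
                          show Rl (t :: q) (b :: t :: b :: w₃)
                          refine (Rl.cons t hq).trans ?_
                          refine (Rl.cons t (Rl.cons b hw₂)).trans ?_
                          exact Rl.braidL hatb w₃
                        · rw [comp_dst (fun h => haab (adjP_symm h))]
                          show Rl v (a :: t :: b :: w₃)
                          refine h₂'.trans ?_
                          refine (Rl.cons t (Rl.cons b hw₁)).trans ?_
                          refine (Rl.cons t (Rl.swapL (dstP_symm ⟨haab, hab⟩) w₃)).trans ?_
                          exact Rl.swapL (dstP_symm hdat) (b :: w₃)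
                    · rw [comp_dst hatb] at h₁
                      rw [comp_dst (fun h => hatb (adjP_symm h))] at h₂
                      have h₁' : Rl (a :: q) (b :: w₁) := by simpa using h₁
                      have h₂' : Rl v (t :: w₁) := by simpa using h₂
                      by_cases haab : adjP a b
                      · -- LEAF 2a-DA
                        obtain ⟨w₂, hq, hw₁⟩ := lcmA a b q w₁ haab h₁' hqN
                        refine ⟨t :: w₂, ?_, ?_⟩
                        · rw [comp_adj haab, h2]
                          show Rl (t :: q) (b :: a :: t :: w₂)
                          refine (Rl.cons t hq).trans ?_
                          refine (Rl.swapL ⟨hatb, hrb⟩ (a :: w₂)).trans ?_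
                          exact Rl.cons b (Rl.swapL (dstP_symm hdat) w₂)
                        · rw [comp_adj (adjP_symm haab)]
                          show Rl v (a :: b :: t :: w₂)
                          refine h₂'.trans ?_
                          refine (Rl.cons t hw₁).trans ?_
                          refine (Rl.swapL (dstP_symm hdat) (b :: w₂)).trans ?_
                          exact Rl.cons a (Rl.swapL ⟨hatb, hrb⟩ w₂)
                      · -- LEAF 2a-DD
                        obtain ⟨w₂, hq, hw₁⟩ := lcmD a b q w₁ ⟨haab, hab⟩ h₁' hqN
                        refine ⟨t :: w₂, ?_, ?_⟩
                        · rw [comp_dst haab, h2]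
                          show Rl (t :: q) (b :: t :: w₂)
                          exact (Rl.cons t hq).trans (Rl.swapL ⟨hatb, hrb⟩ w₂)
                        · rw [comp_dst (fun h => haab (adjP_symm h))]
                          show Rl v (a :: t :: w₂)
                          exact h₂'.trans ((Rl.cons t hw₁).trans (Rl.swapL (dstP_symm hdat) w₂))
              · -- adjacent relation at the head : x = a t a q , x' = t a t q , adj a t
                subst hlw hrw
                have he1' : a :: u = s :: t :: s :: q := by simpa using he1
                injection he1' with h1 h2
                subst h1
                have hadat : adjP a t := hst
                have hta : t ≠ a := by rcases hadat with h | h <;> omega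
                have hqN : q.length + 2 ≤ N := by rw [h2] at hulen; simp at hulen; omega
                have he2' : x' = t :: (a :: t :: q) := by simpa using he2
                have hx'len : x'.length ≤ N + 1 := by
                  rw [he2']; simp only [List.length_cons]; omega
                have hK := ihk hx'len t (a :: t :: q) he2' b v hybv
                constructor
                · -- cancellation branch : b = a
                  intro hab; subst hab
                  obtain ⟨w₁, h₁, h₂⟩ := hK.2 hta
                  rw [comp_adj (adjP_symm hadat)] at h₁
                  rw [comp_adj hadat] at h₂
                  have h₁' : Rl (a :: t :: q) (a :: t :: w₁) := by simpa using h₁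
                  have h₂' : Rl v (t :: a :: w₁) := by simpa using h₂
                  have hq : Rl q w₁ :=
                    canc t q w₁ (canc a (t :: q) (t :: w₁) h₁'
                      (by simp only [List.length_cons]; omega)) (by omega)
                  rw [h2]
                  exact (Rl.cons t (Rl.cons a hq)).trans h₂'.symm
                · -- lcm branch
                  intro hab
                  by_cases hrb : t = b
                  · subst hrb
                    have h₀ : Rl (a :: t :: q) v := hK.1 rfl
                    refine ⟨q, ?_, ?_⟩
                    · rw [comp_adj hadat, h2]; exact Rl.refl _
                    · rw [comp_adj (adjP_symm hadat)]
                      exact h₀.symm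
                  · obtain ⟨w₁, h₁, h₂⟩ := hK.2 hrb
                    by_cases hatb : adjP t b
                    · -- LEAF 2b-AD (necessarily dst a b)
                      have hdab : ¬ adjP a b := by
                        intro hc
                        rcases hadat with h | h <;> rcases hatb with h' | h' <;>
                          rcases hc with h'' | h'' <;> omega
                      rw [comp_adj hatb] at h₁
                      rw [comp_adj (adjP_symm hatb)] at h₂
                      have h₁' : Rl (a :: t :: q) (b :: t :: w₁) := by simpa using h₁
                      have h₂' : Rl v (t :: b :: w₁) := by simpa using h₂
                      have hw₁l : w₁.length = q.length := by
                        have := h₁'.length; simp only [List.length_cons] at this; omega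
                      obtain ⟨w₂, h₃, h₄⟩ := lcmD a b (t :: q) (t :: w₁) ⟨hdab, hab⟩ h₁' (by
                        simp only [List.length_cons]; omega)
                      have hw₂l : w₂.length = q.length := by
                        have := h₃.length; simp only [List.length_cons] at this; omega
                      obtain ⟨w₃, hq, hw₂⟩ := lcmA t b q w₂ hatb h₃ (by omega)
                      have hw₃l : w₃.length + 2 = q.length := by
                        have := hq.length; simp only [List.length_cons] at this; omega
                      obtain ⟨w₄, hw₁, hw₂'⟩ := lcmA t a w₁ w₂ (adjP_symm hadat) h₄ (by omega)
                      have h₅ : Rl (b :: w₃) (a :: w₄) :=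
                        canc t (b :: w₃) (a :: w₄) (hw₂.symm.trans hw₂') (by
                          simp only [List.length_cons]; omega)
                      obtain ⟨w₅, hw₃, hw₄⟩ :=
                        lcmD b a w₃ w₄ (dstP_symm ⟨hdab, hab⟩) h₅ (by omega)
                      refine ⟨t :: b :: a :: t :: w₅, ?_, ?_⟩
                      · rw [comp_dst hdab, h2]
                        show Rl (t :: a :: q) (b :: t :: b :: a :: t :: w₅)
                        refine (Rl.cons t (Rl.cons a hq)).trans ?_
                        refine (Rl.cons t (Rl.cons a (Rl.cons b (Rl.cons t hw₃)))).trans ?_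
                        refine (Rl.cons t (Rl.swapL ⟨hdab, hab⟩ (t :: a :: w₅))).trans ?_
                        refine (Rl.cons t (Rl.cons b (Rl.braidL hadat w₅))).trans ?_
                        exact Rl.braidL hatb (a :: t :: w₅)
                      · rw [comp_dst (fun h => hdab (adjP_symm h))]
                        show Rl v (a :: t :: b :: a :: t :: w₅)
                        refine h₂'.trans ?_
                        refine (Rl.cons t (Rl.cons b hw₁)).trans ?_
                        refine (Rl.cons t (Rl.cons b (Rl.cons a (Rl.cons t hw₄)))).trans ?_
                        refine (Rl.cons t (Rl.swapL (dstP_symm ⟨hdab, hab⟩) (t :: b :: w₅))).trans ?_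
                        refine (Rl.cons t (Rl.cons a (Rl.braidL (adjP_symm hatb) w₅))).trans ?_
                        refine (Rl.braidL (adjP_symm hadat) (b :: t :: w₅)).trans ?_
                        exact Rl.cons a (Rl.cons t (Rl.swapL ⟨hdab, hab⟩ (t :: w₅)))
                    · rw [comp_dst hatb] at h₁
                      rw [comp_dst (fun h => hatb (adjP_symm h))] at h₂
                      have h₁' : Rl (a :: t :: q) (b :: w₁) := by simpa using h₁
                      have h₂' : Rl v (t :: w₁) := by simpa using h₂
                      have hw₁l : w₁.length = q.length + 1 := by
                        have := h₁'.length; simp only [List.length_cons] at this; omega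
                      by_cases haab : adjP a b
                      · -- LEAF 2b-DA
                        obtain ⟨w₂, h₃, hw₁⟩ := lcmA a b (t :: q) w₁ haab h₁' (by
                          simp only [List.length_cons]; omega)
                        have hw₂l : w₂.length + 1 = q.length := by
                          have := h₃.length; simp only [List.length_cons] at this; omega
                        obtain ⟨w₃, hq, h₄⟩ := lcmD t b q (a :: w₂) ⟨hatb, hrb⟩ h₃ (by omega)
                        obtain ⟨w₄, hw₂, hw₃⟩ := lcmA a t w₂ w₃ hadat h₄ (by omega)
                        refine ⟨t :: a :: b :: w₄, ?_, ?_⟩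
                        · rw [comp_adj haab, h2]
                          show Rl (t :: a :: q) (b :: a :: t :: a :: b :: w₄)
                          refine (Rl.cons t (Rl.cons a hq)).trans ?_
                          refine (Rl.cons t (Rl.cons a (Rl.cons b hw₃))).trans ?_
                          refine (Rl.cons t (Rl.braidL haab (t :: w₄))).trans ?_
                          refine (Rl.swapL ⟨hatb, hrb⟩ (a :: b :: t :: w₄)).trans ?_
                          refine (Rl.cons b (Rl.cons t (Rl.cons a (Rl.swapL (dstP_symm ⟨hatb, hrb⟩) w₄)))).trans ?_
                          exact Rl.cons b (Rl.braidL (adjP_symm hadat) (b :: w₄))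
                        · rw [comp_adj (adjP_symm haab)]
                          show Rl v (a :: b :: t :: a :: b :: w₄)
                          refine h₂'.trans ?_
                          refine (Rl.cons t hw₁).trans ?_
                          refine (Rl.cons t (Rl.cons a (Rl.cons b hw₂))).trans ?_
                          refine (Rl.cons t (Rl.cons a (Rl.swapL (dstP_symm ⟨hatb, hrb⟩) (a :: w₄)))).trans ?_
                          refine (Rl.braidL (adjP_symm hadat) (b :: a :: w₄)).trans ?_
                          refine (Rl.cons a (Rl.cons t (Rl.braidL haab w₄))).trans ?_
                          exact Rl.cons a (Rl.swapL ⟨hatb, hrb⟩ (a :: b :: w₄))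
                      · -- LEAF 2b-DD
                        obtain ⟨w₂, h₃, hw₁⟩ := lcmD a b (t :: q) w₁ ⟨haab, hab⟩ h₁' (by
                          simp only [List.length_cons]; omega)
                        have hw₂l : w₂.length = q.length := by
                          have := h₃.length; simp only [List.length_cons] at this; omega
                        obtain ⟨w₃, hq, hw₂⟩ := lcmD t b q w₂ ⟨hatb, hrb⟩ h₃ (by omega)
                        refine ⟨t :: a :: w₃, ?_, ?_⟩
                        · rw [comp_dst haab, h2]
                          show Rl (t :: a :: q) (b :: t :: a :: w₃)
                          refine (Rl.cons t (Rl.cons a hq)).trans ?_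
                          refine (Rl.cons t (Rl.swapL ⟨haab, hab⟩ w₃)).trans ?_
                          exact Rl.swapL ⟨hatb, hrb⟩ (a :: w₃)
                        · rw [comp_dst (fun h => haab (adjP_symm h))]
                          show Rl v (a :: t :: a :: w₃)
                          refine h₂'.trans ?_
                          refine (Rl.cons t hw₁).trans ?_
                          refine (Rl.cons t (Rl.cons a hw₂)).trans ?_
                          exact Rl.braidL (adjP_symm hadat) w₃

/-! ### Stage 3: quotient level -/

/-- product of a word in the braid monoid -/
def pw (w : List ℕ) : BraidMonoid := (artinCon braidM).mk' (FreeMonoid.ofList w)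

lemma pw_append (u v : List ℕ) : pw (u ++ v) = pw u * pw v := by
  show (artinCon braidM).mk' (FreeMonoid.ofList u * FreeMonoid.ofList v) = _
  rw [map_mul]; rfl

lemma pw_nil : pw [] = 1 := rfl

lemma pw_single (s : ℕ) : pw [s] = bσ s := rfl

lemma pw_cons (s : ℕ) (w : List ℕ) : pw (s :: w) = bσ s * pw w := by
  rw [show s :: w = [s] ++ w from rfl, pw_append, pw_single]

lemma pw_eq_iff {u v : List ℕ} : pw u = pw v ↔ Rl u v := Con.eq _

lemma exists_word (x : BraidMonoid) : ∃ w : List ℕ, x = pw w := by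
  obtain ⟨f, rfl⟩ := Con.mk'_surjective (c := artinCon braidM) x
  exact ⟨f.toList, by simp [pw]⟩

/-- left cancellation by a generator -/
lemma mul_left_cancel_gen {s : ℕ} {x y : BraidMonoid}
    (h : bσ s * x = bσ s * y) : x = y := by
  obtain ⟨u, rfl⟩ := exists_word x
  obtain ⟨v, rfl⟩ := exists_word y
  rw [← pw_cons, ← pw_cons, pw_eq_iff] at h
  exact pw_eq_iff.2
    ((keyLemma (s :: u).length _ _ (rl_iff_ch.1 h) le_rfl s u rfl s v rfl).1 rfl)

/-- left lcm of two distinct generators -/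
lemma gen_left_lcm {s t : ℕ} (hne : s ≠ t) {x y : BraidMonoid}
    (h : bσ s * x = bσ t * y) :
    ∃ z, x = pw (comp s t) * z ∧ y = pw (comp t s) * z := by
  obtain ⟨u, rfl⟩ := exists_word x
  obtain ⟨v, rfl⟩ := exists_word y
  rw [← pw_cons, ← pw_cons, pw_eq_iff] at h
  obtain ⟨w, h1, h2⟩ :=
    (keyLemma (s :: u).length _ _ (rl_iff_ch.1 h) le_rfl s u rfl t v rfl).2 hne
  exact ⟨pw w, by rw [← pw_append]; exact pw_eq_iff.2 h1,
    by rw [← pw_append]; exact pw_eq_iff.2 h2⟩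

/-! reversal -/

lemma StepL.reverse {x y : List ℕ} (h : StepL x y) : StepL x.reverse y.reverse := by
  obtain ⟨p, q, lu, lv, h1, h2, h3⟩ := h
  refine ⟨q.reverse, p.reverse, lu.reverse, lv.reverse, ?_, by simp [h2], by simp [h3]⟩
  rcases h1 with ⟨s, t, hd, hu, hv⟩ | ⟨s, t, hd, hu, hv⟩
  · exact Or.inl ⟨t, s, dstP_symm hd, by simp [hu], by simp [hv]⟩
  · exact Or.inr ⟨s, t, hd, by simp [hu], by simp [hv]⟩

lemma Rl.reverse {x y : List ℕ} (h : Rl x y) : Rl x.reverse y.reverse := by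
  rw [rl_iff_ch] at h ⊢
  induction h with
  | refl => exact Relation.ReflTransGen.refl
  | tail _ hs ih => exact ih.tail hs.reverse

/-- word reversal as a map on the braid monoid -/
def revM : BraidMonoid → BraidMonoid :=
  Quotient.lift (fun w : FreeMonoid ℕ => pw w.toList.reverse)
    (fun a b hab => pw_eq_iff.2 (Rl.reverse (by
      show Rl a.toList b.toList
      simpa [Rl] using hab)))

lemma revM_pw (w : List ℕ) : revM (pw w) = pw w.reverse := rfl

lemma revM_mul (x y : BraidMonoid) : revM (x * y) = revM y * revM x := by
  obtain ⟨u, rfl⟩ := exists_word x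
  obtain ⟨v, rfl⟩ := exists_word y
  rw [← pw_append, revM_pw, revM_pw, revM_pw, ← pw_append, List.reverse_append]

lemma revM_revM (x : BraidMonoid) : revM (revM x) = x := by
  obtain ⟨u, rfl⟩ := exists_word x
  rw [revM_pw, revM_pw, List.reverse_reverse]

lemma revM_gen (s : ℕ) : revM (bσ s) = bσ s := rfl

/-- right cancellation by a generator -/
lemma mul_right_cancel_gen {s : ℕ} {x y : BraidMonoid}
    (h : x * bσ s = y * bσ s) : x = y := by
  have h2 := congrArg revM h
  rw [revM_mul, revM_mul, revM_gen] at h2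
  have := mul_left_cancel_gen h2
  have h3 := congrArg revM this
  rwa [revM_revM, revM_revM] at h3

/-- right cancellation -/
lemma mul_right_cancel {g x y : BraidMonoid} (h : x * g = y * g) : x = y := by
  obtain ⟨w, rfl⟩ := exists_word g
  induction w generalizing x y with
  | nil => simpa [pw_nil] using h
  | cons c w ih =>
      rw [pw_cons, ← mul_assoc, ← mul_assoc] at h
      exact mul_right_cancel_gen (ih h)

/-- left cancellation -/
lemma mul_left_cancel {g x y : BraidMonoid} (h : g * x = g * y) : x = y := by
  have h2 := congrArg revM h
  rw [revM_mul, revM_mul] at h2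
  have := mul_right_cancel h2
  have h3 := congrArg revM this
  rwa [revM_revM, revM_revM] at h3

/-- distant generators commute -/
lemma comm_dst {s t : ℕ} (h : dstP s t) : bσ s * bσ t = bσ t * bσ s := by
  rw [← pw_single, ← pw_single, ← pw_append, ← pw_append]
  exact pw_eq_iff.2 (Rl.swapL h [])

/-- right lcm of two distant generators -/
lemma gen_right_lcm_dst {s t : ℕ} (hd : dstP s t) {z x y : BraidMonoid}
    (hx : z = x * bσ s) (hy : z = y * bσ t) :
    ∃ w, z = w * (bσ s * bσ t) := by
  have h : bσ s * revM x = bσ t * revM y := by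
    have h1 := congrArg revM (hx.symm.trans hy)
    rw [revM_mul, revM_mul, revM_gen, revM_gen] at h1
    exact h1
  obtain ⟨z₁, h1, _⟩ := gen_left_lcm hd.2 h
  rw [comp_dst hd.1] at h1
  have hx2 : x = revM z₁ * (bσ t) := by
    have := congrArg revM h1
    rw [revM_revM, revM_mul] at this
    rw [this]
    congr 1
  refine ⟨revM z₁, ?_⟩
  rw [hx, hx2, mul_assoc, comm_dst (dstP_symm hd)]

/-- lcm of a generator with a distant word (right divisibility) -/
lemma lcm_gen_word_dst (w : List ℕ) (s : ℕ) (hd : ∀ t ∈ w, dstP s t) :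
    ∀ z x u : BraidMonoid, z = u * bσ s → z = x * pw w →
      ∃ y, z = y * (pw w * bσ s) := by
  induction w using List.reverseRecOn with
  | nil => intro z x u hu hx; exact ⟨u, by rw [hu, pw_nil, one_mul]⟩
  | append_singleton w' t ih =>
      intro z x u hu hx
      have hst : dstP s t := hd t (by simp)
      rw [pw_append, pw_single, ← mul_assoc] at hx
      obtain ⟨y₀, hy₀⟩ := gen_right_lcm_dst hst hu hx
      have hy₀' : z = (y₀ * bσ s) * bσ t := by
        rw [hy₀, mul_assoc]
      have hc : x * pw w' = y₀ * bσ s := mul_right_cancel_gen (hx.symm.trans hy₀')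
      obtain ⟨y₂, hy₂⟩ := ih (fun r hr => hd r (by simp [hr])) (x * pw w') x y₀ hc rfl
      refine ⟨y₂, ?_⟩
      rw [pw_append, pw_single, hx, hy₂]
      simp only [mul_assoc]
      rw [comm_dst hst]

/-- lcm of two letterwise-distant words (right divisibility) -/
lemma lcm_words_dst (wv wu : List ℕ) (hd : ∀ s ∈ wu, ∀ t ∈ wv, dstP t s) :
    ∀ z x y : BraidMonoid, z = x * pw wu → z = y * pw wv →
      ∃ m, z = m * (pw wu * pw wv) := by
  induction wv using List.reverseRecOn with
  | nil => intro z x y hx hy; exact ⟨x, by rw [hx, pw_nil, mul_one]⟩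
  | append_singleton w' t ih =>
      intro z x y hx hy
      rw [pw_append, pw_single, ← mul_assoc] at hy
      obtain ⟨y₁, hy₁⟩ := lcm_gen_word_dst wu t
        (fun r hr => hd r hr t (by simp)) z x (y * pw w') hy hx
      have hc : y * pw w' = y₁ * pw wu := by
        refine mul_right_cancel_gen (s := t) ?_
        rw [← hy, hy₁, mul_assoc]
      obtain ⟨m, hm⟩ := ih (fun r hr u hu => hd r hr u (by simp [hu]))
        (y * pw w') y₁ y hc rfl
      refine ⟨m, ?_⟩
      rw [pw_append, pw_single, hy, hm]
      simp only [mul_assoc]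

/-! ### Stage 4: concrete words -/

def wdesc (k j : ℕ) : List ℕ := (List.range' j (k + 1 - j)).reverse

lemma pw_eq_prod (w : List ℕ) : pw w = (w.map bσ).prod := by
  induction w with
  | nil => rfl
  | cons c w ih => rw [pw_cons, ih]; simp

lemma bdesc_eq_pw (k j : ℕ) : bdesc k j = pw (wdesc k j) := by
  rw [bdesc, wdesc, pw_eq_prod]

lemma mem_wdesc {t k j : ℕ} : t ∈ wdesc k j ↔ j ≤ t ∧ t ≤ k := by
  rw [wdesc, List.mem_reverse, List.mem_range'_1]
  omega

lemma wdesc_split {m k j : ℕ} (h1 : j ≤ m) (h2 : m ≤ k + 1) (h3 : 1 ≤ m) :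
    wdesc k j = wdesc k m ++ wdesc (m - 1) j := by
  rw [wdesc, wdesc, wdesc, ← List.reverse_append]
  congr 1
  have : m - 1 + 1 - j = m - j := by omega
  rw [this]
  have h4 : List.range' j (m - j) ++ List.range' (j + (m - j)) (k + 1 - m) =
      List.range' j (k + 1 - m + (m - j)) := List.range'_append_1.trans (by rw [Nat.add_comm])
  have h5 : j + (m - j) = m := by omega
  have h6 : k + 1 - m + (m - j) = k + 1 - j := by omega
  rw [h5, h6] at h4
  exact h4.symm

lemma bdesc_split {m k j : ℕ} (h1 : j ≤ m) (h2 : m ≤ k + 1) (h3 : 1 ≤ m) :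
    bdesc k j = bdesc k m * bdesc (m - 1) j := by
  rw [bdesc_eq_pw, bdesc_eq_pw, bdesc_eq_pw, wdesc_split h1 h2 h3, pw_append]

/-- word for `factorWord` -/
def wfactor (i : ℕ → ℕ) (j : ℕ) : List ℕ := if i j = 0 then [] else wdesc (i j - 1 + j) j

lemma factorWord_eq_pw (i : ℕ → ℕ) (j : ℕ) : factorWord i j = pw (wfactor i j) := by
  unfold factorWord wfactor
  split
  · rfl
  · exact bdesc_eq_pw _ _

lemma mem_wfactor {i : ℕ → ℕ} {j t : ℕ} (h : t ∈ wfactor i j) :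
    j ≤ t ∧ t ≤ i j - 1 + j ∧ 1 ≤ i j := by
  unfold wfactor at h
  split at h
  · simp at h
  · rw [mem_wdesc] at h
    omega

/-- word for `factorProd` -/
def wfactors (i : ℕ → ℕ) (p : ℕ) : List ℕ := ((List.range' 2 p).map (wfactor i)).flatten

lemma pw_flatten (L : List (List ℕ)) : pw L.flatten = (L.map pw).prod := by
  induction L with
  | nil => rfl
  | cons u L ih => rw [List.flatten_cons, pw_append, ih]; simp

lemma factorProd_eq_pw (i : ℕ → ℕ) (p : ℕ) : factorProd i p = pw (wfactors i p) := by
  rw [factorProd, wfactors, pw_flatten, List.map_map]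
  congr 1
  apply List.map_congr_left
  intro j _
  exact factorWord_eq_pw i j

lemma mem_wfactors {i : ℕ → ℕ} {p t : ℕ} (h : t ∈ wfactors i p) :
    ∃ j, 2 ≤ j ∧ j ≤ p + 1 ∧ j ≤ t ∧ t ≤ i j - 1 + j ∧ 1 ≤ i j := by
  rw [wfactors, List.mem_flatten] at h
  obtain ⟨u, hu, ht⟩ := h
  rw [List.mem_map] at hu
  obtain ⟨j, hj, rfl⟩ := hu
  rw [List.mem_range'_1] at hj
  obtain ⟨h1, h2, h3⟩ := mem_wfactor ht
  exact ⟨j, by omega, by omega, h1, h2, h3⟩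

lemma dstP_of_lt {s t : ℕ} (h : s + 2 ≤ t) : dstP s t := by
  constructor
  · intro hc; rcases hc with hc | hc <;> omega
  · omega

/-- a generator commutes with a word of distant letters -/
lemma comm_gen_pw {s : ℕ} {v : List ℕ} (h : ∀ t ∈ v, dstP s t) :
    bσ s * pw v = pw v * bσ s := by
  induction v with
  | nil => rw [pw_nil, one_mul, mul_one]
  | cons c v ih =>
      rw [pw_cons, ← mul_assoc, comm_dst (h c (by simp)), mul_assoc,
        ih (fun t ht => h t (by simp [ht])), ← mul_assoc]

/-- letterwise distant words commute -/
lemma comm_pw_pw {u v : List ℕ} (h : ∀ s ∈ u, ∀ t ∈ v, dstP s t) :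
    pw u * pw v = pw v * pw u := by
  induction u with
  | nil => rw [pw_nil, one_mul, mul_one]
  | cons c u ih =>
      rw [pw_cons, mul_assoc, ih (fun s hs t ht => h s (by simp [hs]) t ht),
        ← mul_assoc, comm_gen_pw (h c (by simp)), mul_assoc]

/-! ### Stage 5: the main theorem -/

/-- the splitting c_j = a'_j a_j -/
lemma factor_split {i l : ℕ → ℕ} {j : ℕ} (h : i j ≤ l j) :
    factorWord l j = primeWord i l j * factorWord i j := by
  rcases Nat.lt_or_ge (i j) (l j) with hlt | hge
  · rw [primeWord, if_pos hlt]
    by_cases hz : i j = 0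
    · have h1 : factorWord i j = 1 := by rw [factorWord, if_pos hz]
      have h2 : factorWord l j = bdesc (l j - 1 + j) j := by
        rw [factorWord, if_neg (by omega)]
      rw [h1, mul_one, h2, hz, zero_add]
    · have h2 : factorWord l j = bdesc (l j - 1 + j) j := by
        rw [factorWord, if_neg (by omega)]
      have h3 : factorWord i j = bdesc (i j - 1 + j) j := by
        rw [factorWord, if_neg hz]
      have harg : i j + j - 1 = i j - 1 + j := by omega
      rw [h2, h3, bdesc_split (m := i j + j) (k := l j - 1 + j) (j := j)
        (by omega) (by omega) (by omega), harg]
  · have : i j = l j := by omega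
    rw [primeWord, if_neg (by omega), one_mul]
    rw [factorWord, factorWord, this]

lemma cWord_eq_prime_mul_i (i l : ℕ → ℕ) (j : ℕ) :
    cWord i l j = primeWord i l j * factorWord i j := by
  rcases le_or_gt (l j) (i j) with h | h
  · rw [cWord, if_pos h, primeWord, if_neg (by omega), one_mul]
  · rw [cWord, if_neg (by omega)]
    exact factor_split (le_of_lt h)

lemma cWord_eq_prime_mul_l (i l : ℕ → ℕ) (j : ℕ) :
    cWord i l j = primeWord l i j * factorWord l j := by
  rcases le_or_gt (l j) (i j) with h | h
  · rw [cWord, if_pos h]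
    exact factor_split h
  · rw [cWord, if_neg (by omega), primeWord, if_neg (by omega), one_mul]


/-- With a = a_2⋯a_{p+1}, b = b_2⋯b_{p+1} built from weakly increasing index
sequences i and l, the element c = c_2⋯c_{p+1} (taking the longer factor in
each position) is the least common multiple of a and b with respect to
right-divisibility; in particular c = a′a = b′b with
a′ = a′_2⋯a′_{p+1} and b′ = b′_2⋯b′_{p+1}. -/
theorem braid_product_lcm (p : ℕ) (i l : ℕ → ℕ)
    (hi : ∀ j, 2 ≤ j → j ≤ p → i j ≤ i (j + 1))
    (hl : ∀ j, 2 ≤ j → j ≤ p → l j ≤ l (j + 1)) :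
    RDvd (factorProd i p) (((List.range' 2 p).map (cWord i l)).prod) ∧
    RDvd (factorProd l p) (((List.range' 2 p).map (cWord i l)).prod) ∧
    (∀ x : BraidMonoid, RDvd (factorProd i p) x → RDvd (factorProd l p) x →
      RDvd (((List.range' 2 p).map (cWord i l)).prod) x) ∧
    ((List.range' 2 p).map (cWord i l)).prod =
      ((List.range' 2 p).map (primeWord i l)).prod * factorProd i p ∧
    ((List.range' 2 p).map (cWord i l)).prod =
      ((List.range' 2 p).map (primeWord l i)).prod * factorProd l p := by
  -- monotonicity
  have himono : ∀ (f : ℕ → ℕ), (∀ j, 2 ≤ j → j ≤ p → f j ≤ f (j + 1)) →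
      ∀ j k, 2 ≤ j → j ≤ k → k ≤ p + 1 → f j ≤ f k := by
    intro f hf j k h2 hjk hk
    induction k with
    | zero => omega
    | succ k ih =>
        rcases Nat.lt_or_ge j (k + 1) with h | h
        · exact le_trans (ih (by omega) (by omega)) (hf k (by omega) (by omega))
        · have : j = k + 1 := by omega
          rw [this]
  -- the commutation of the prime factor with the earlier product
  have hcomm : ∀ (f g : ℕ → ℕ), (∀ j, 2 ≤ j → j ≤ p → f j ≤ f (j + 1)) → ∀ q, q + 1 ≤ p →
      factorProd f q * primeWord f g (2 + q) = primeWord f g (2 + q) * factorProd f q := by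
    intro f g hf q hq
    rw [primeWord]
    split
    · rw [factorProd_eq_pw, bdesc_eq_pw]
      apply comm_pw_pw
      intro s hs t ht
      obtain ⟨j, hj2, hjq, hjs, hsle, hfj⟩ := mem_wfactors hs
      rw [mem_wdesc] at ht
      have hmono := himono f hf j (2 + q) hj2 (by omega) (by omega)
      apply dstP_of_lt
      omega
    · rw [mul_one, one_mul]
  -- main induction
  have main : ∀ q, q ≤ p →
      (((List.range' 2 q).map (cWord i l)).prod =
        ((List.range' 2 q).map (primeWord i l)).prod * factorProd i q) ∧
      (((List.range' 2 q).map (cWord i l)).prod =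
        ((List.range' 2 q).map (primeWord l i)).prod * factorProd l q) ∧
      (∀ x, RDvd (factorProd i q) x → RDvd (factorProd l q) x →
        RDvd (((List.range' 2 q).map (cWord i l)).prod) x) := by
    intro q
    induction q with
    | zero =>
        intro _
        refine ⟨by simp [factorProd], by simp [factorProd], ?_⟩
        intro x _ _
        exact ⟨x, by simp⟩
    | succ q ih =>
        intro hq
        obtain ⟨ih1, ih2, ih3⟩ := ih (by omega)
        have hconc : List.range' 2 (q + 1) = List.range' 2 q ++ [2 + q] :=
          List.range'_1_concat
        have hsplit : ∀ (F : ℕ → BraidMonoid),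
            ((List.range' 2 (q + 1)).map F).prod = ((List.range' 2 q).map F).prod * F (2 + q) := by
          intro F
          rw [hconc]; simp
        have hA : factorProd i (q + 1) = factorProd i q * factorWord i (2 + q) := by
          rw [factorProd, hsplit, factorProd]
        have hB : factorProd l (q + 1) = factorProd l q * factorWord l (2 + q) := by
          rw [factorProd, hsplit, factorProd]
        have hCA : ((List.range' 2 (q + 1)).map (cWord i l)).prod =
            ((List.range' 2 (q + 1)).map (primeWord i l)).prod * factorProd i (q + 1) := by
          rw [hsplit, hsplit, hA, ih1, cWord_eq_prime_mul_i]
          have := hcomm i l hi q hq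
          calc ((List.range' 2 q).map (primeWord i l)).prod * factorProd i q *
                (primeWord i l (2 + q) * factorWord i (2 + q))
              = ((List.range' 2 q).map (primeWord i l)).prod *
                (factorProd i q * primeWord i l (2 + q)) * factorWord i (2 + q) := by
                simp only [mul_assoc]
            _ = ((List.range' 2 q).map (primeWord i l)).prod *
                (primeWord i l (2 + q) * factorProd i q) * factorWord i (2 + q) := by rw [this]
            _ = ((List.range' 2 q).map (primeWord i l)).prod * primeWord i l (2 + q) *
                (factorProd i q * factorWord i (2 + q)) := by simp only [mul_assoc]
        have hCB : ((List.range' 2 (q + 1)).map (cWord i l)).prod =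
            ((List.range' 2 (q + 1)).map (primeWord l i)).prod * factorProd l (q + 1) := by
          rw [hsplit, hsplit, hB, ih2, cWord_eq_prime_mul_l]
          have := hcomm l i hl q hq
          calc ((List.range' 2 q).map (primeWord l i)).prod * factorProd l q *
                (primeWord l i (2 + q) * factorWord l (2 + q))
              = ((List.range' 2 q).map (primeWord l i)).prod *
                (factorProd l q * primeWord l i (2 + q)) * factorWord l (2 + q) := by
                simp only [mul_assoc]
            _ = ((List.range' 2 q).map (primeWord l i)).prod *
                (primeWord l i (2 + q) * factorProd l q) * factorWord l (2 + q) := by rw [this]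
            _ = ((List.range' 2 q).map (primeWord l i)).prod * primeWord l i (2 + q) *
                (factorProd l q * factorWord l (2 + q)) := by simp only [mul_assoc]
        refine ⟨hCA, hCB, ?_⟩
        -- minimality
        intro z hzA hzB
        obtain ⟨u, hu⟩ := hzA
        obtain ⟨v, hv⟩ := hzB
        rw [hA] at hu
        rw [hB] at hv
        have hu' : z = (u * factorProd i q) * factorWord i (2 + q) := by
          rw [hu]; simp only [mul_assoc]
        have hv' : z = (v * factorProd l q) * factorWord l (2 + q) := by
          rw [hv]; simp only [mul_assoc]
        have hγa : cWord i l (2 + q) = primeWord i l (2 + q) * factorWord i (2 + q) :=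
          cWord_eq_prime_mul_i i l (2 + q)
        have hγb : cWord i l (2 + q) = primeWord l i (2 + q) * factorWord l (2 + q) :=
          cWord_eq_prime_mul_l i l (2 + q)
        -- get the common w with z = w * γ, u * A = w * α', v * B = w * β'
        have hW : ∃ w, z = w * cWord i l (2 + q) ∧
            u * factorProd i q = w * primeWord i l (2 + q) ∧
            v * factorProd l q = w * primeWord l i (2 + q) := by
          rcases le_or_gt (l (2 + q)) (i (2 + q)) with hle | hlt
          · refine ⟨u * factorProd i q, ?_, ?_, ?_⟩
            · rw [cWord, if_pos hle]; exact hu'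
            · rw [primeWord, if_neg (by omega), mul_one]
            · apply mul_right_cancel (g := factorWord l (2 + q))
              rw [← hv', mul_assoc, ← hγb, cWord, if_pos hle, ← hu']
          · refine ⟨v * factorProd l q, ?_, ?_, ?_⟩
            · rw [cWord, if_neg (by omega)]; exact hv'
            · apply mul_right_cancel (g := factorWord i (2 + q))
              rw [← hu', mul_assoc, ← hγa, cWord, if_neg (by omega), ← hv']
            · rw [primeWord, if_neg (by omega), mul_one]
        obtain ⟨w, hwz, hwa, hwb⟩ := hW
        -- divide w by the two partial products
        have hdivA : ∃ m, w = m * factorProd i q := by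
          rcases Nat.lt_or_ge (i (2 + q)) (l (2 + q)) with hlt | hge
          · have hp : primeWord i l (2 + q) =
                pw (wdesc (l (2 + q) - 1 + (2 + q)) (i (2 + q) + (2 + q))) := by
              rw [primeWord, if_pos hlt, bdesc_eq_pw]
            obtain ⟨m, hm⟩ := lcm_words_dst
              (wdesc (l (2 + q) - 1 + (2 + q)) (i (2 + q) + (2 + q)))
              (wfactors i q) (by
                intro s hs t ht
                obtain ⟨j, hj2, hjq, hjs, hsle, hfj⟩ := mem_wfactors hs
                rw [mem_wdesc] at ht
                have hmono := himono i hi j (2 + q) hj2 (by omega) (by omega)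
                apply dstP_symm
                apply dstP_of_lt
                omega)
              (u * factorProd i q) u w
              (by rw [factorProd_eq_pw]) (by rw [hwa, hp])
            refine ⟨m, mul_right_cancel (g := primeWord i l (2 + q)) ?_⟩
            rw [← hwa, hm, hp, factorProd_eq_pw]
            simp only [mul_assoc]
          · have h0 := hwa
            rw [primeWord, if_neg (by omega), mul_one] at h0
            exact ⟨u, h0.symm⟩
        have hdivB : ∃ m, w = m * factorProd l q := by
          rcases Nat.lt_or_ge (l (2 + q)) (i (2 + q)) with hlt | hge
          · have hp : primeWord l i (2 + q) =
                pw (wdesc (i (2 + q) - 1 + (2 + q)) (l (2 + q) + (2 + q))) := by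
              rw [primeWord, if_pos hlt, bdesc_eq_pw]
            obtain ⟨m, hm⟩ := lcm_words_dst
              (wdesc (i (2 + q) - 1 + (2 + q)) (l (2 + q) + (2 + q)))
              (wfactors l q) (by
                intro s hs t ht
                obtain ⟨j, hj2, hjq, hjs, hsle, hfj⟩ := mem_wfactors hs
                rw [mem_wdesc] at ht
                have hmono := himono l hl j (2 + q) hj2 (by omega) (by omega)
                apply dstP_symm
                apply dstP_of_lt
                omega)
              (v * factorProd l q) v w
              (by rw [factorProd_eq_pw]) (by rw [hwb, hp])
            refine ⟨m, mul_right_cancel (g := primeWord l i (2 + q)) ?_⟩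
            rw [← hwb, hm, hp, factorProd_eq_pw]
            simp only [mul_assoc]
          · have h0 := hwb
            rw [primeWord, if_neg (by omega), mul_one] at h0
            exact ⟨v, h0.symm⟩
        obtain ⟨m', hm'⟩ := ih3 w hdivA hdivB
        refine ⟨m', ?_⟩
        rw [hsplit (cWord i l), hwz, hm']
        simp only [mul_assoc]
  obtain ⟨m1, m2, m3⟩ := main p le_rfl
  exact ⟨⟨_, m1⟩, ⟨_, m2⟩, m3, m1, m2⟩

end ArtinStmt
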